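/- Product formula for the function field 𝔽_q(t): for every nonzero rational function f ∈ 𝔽_q(t), the finitely supported sum, over all monic irreducible polynomials π ∈ 𝔽_q[t], of ord_π(f)·deg(π) equals intDegree(f). Equivalently, the product over all places of the normalized absolute values of f, namely q^{intDegree(f)} · ∏_π q^{−deg(π)·ord_π(f)}, is equal to 1. -/

import Mathlib

open Polynomial UniqueFactorizationMonoid

/-- The order of vanishing of a nonzero rational function `f ∈ 𝔽_q(t)` at a monic
irreducible polynomial `π`: the multiplicity of `π` in the numerator minus the
multiplicity of `π` in the denominator. -/
noncomputable def ordAt {Fq : Type} [Field Fq]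
    (π : Polynomial Fq) (f : RatFunc Fq) : ℤ :=
  (multiplicity π f.num : ℤ) - (multiplicity π f.denom : ℤ)

lemma aux_mult_count {Fq : Type} [Field Fq] [DecidableEq Fq] {π p : Polynomial Fq}
    (hπ : π.Monic ∧ Irreducible π) (hp : p ≠ 0) :
    multiplicity π p = (normalizedFactors p).count π := by
  apply multiplicity_eq_of_emultiplicity_eq_some
  rw [emultiplicity_eq_count_normalizedFactors hπ.2 hp, hπ.1.normalize_eq_self]

lemma aux_nf_prop {Fq : Type} [Field Fq] [DecidableEq Fq] {p π : Polynomial Fq}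
    (h : π ∈ normalizedFactors p) : π.Monic ∧ Irreducible π := by
  have hirr := irreducible_of_normalized_factor π h
  have hn := normalize_normalized_factor π h
  exact ⟨hn ▸ monic_normalize hirr.ne_zero, hirr⟩

lemma aux_mem_nf {Fq : Type} [Field Fq] [DecidableEq Fq] {p π : Polynomial Fq}
    (hπ : π.Monic ∧ Irreducible π) (hp : p ≠ 0) (hdvd : π ∣ p) :
    π ∈ (normalizedFactors p).toFinset := by
  rw [Multiset.mem_toFinset, ← Multiset.count_pos, ← aux_mult_count hπ hp]
  have : multiplicity π p ≠ 0 := fun h => (multiplicity_eq_zero.mp h) hdvd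
  omega

lemma aux_support_subset {Fq : Type} [Field Fq] [DecidableEq Fq]
    [DecidablePred fun π : Polynomial Fq => π.Monic ∧ Irreducible π]
    {p : Polynomial Fq} (hp : p ≠ 0) :
    (Function.support fun π : {π : Polynomial Fq // π.Monic ∧ Irreducible π} =>
      ((multiplicity (π : Polynomial Fq) p : ℤ) * ((π : Polynomial Fq).natDegree : ℤ))) ⊆
    ↑((normalizedFactors p).toFinset.subtype fun π => π.Monic ∧ Irreducible π) := by
  intro π hπ
  simp only [Function.mem_support, ne_eq, mul_eq_zero, not_or] at hπ
  simp only [Finset.mem_coe, Finset.mem_subtype]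
  refine aux_mem_nf π.2 hp ?_
  by_contra hdvd
  exact hπ.1 (by exact_mod_cast congrArg (Nat.cast : ℕ → ℤ) (multiplicity_eq_zero.mpr hdvd))

lemma aux_sum_poly {Fq : Type} [Field Fq] [DecidableEq Fq]
    [DecidablePred fun π : Polynomial Fq => π.Monic ∧ Irreducible π]
    {p : Polynomial Fq} (hp : p ≠ 0) :
    (∑ᶠ π : {π : Polynomial Fq // π.Monic ∧ Irreducible π},
      ((multiplicity (π : Polynomial Fq) p : ℤ) * ((π : Polynomial Fq).natDegree : ℤ)))
      = (p.natDegree : ℤ) := by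
  rw [finsum_eq_finset_sum_of_support_subset _ (aux_support_subset hp)]
  rw [Finset.sum_subtype_eq_sum_filter
    (fun π => ((multiplicity π p : ℤ) * (π.natDegree : ℤ)))]
  rw [Finset.filter_true_of_mem (fun π hπ => aux_nf_prop (Multiset.mem_toFinset.mp hπ))]
  have : ∀ π ∈ (normalizedFactors p).toFinset,
      (multiplicity π p : ℤ) * (π.natDegree : ℤ)
        = (((normalizedFactors p).count π * π.natDegree : ℕ) : ℤ) := by
    intro π hπ
    rw [aux_mult_count (aux_nf_prop (Multiset.mem_toFinset.mp hπ)) hp]; push_cast; ring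
  rw [Finset.sum_congr rfl this, ← Nat.cast_sum]
  norm_cast
  have h2 := (Finset.sum_multiset_map_count (normalizedFactors p) (natDegree)).symm
  simp only [smul_eq_mul] at h2
  rw [h2, ← natDegree_multiset_prod _ (zero_notMem_normalizedFactors p)]
  exact natDegree_eq_natDegree (degree_eq_degree_of_associated (prod_normalizedFactors hp))

lemma aux_finset_zpow {ι : Type*} (a : ℝ) (ha : a ≠ 0) (g : ι → ℤ) (s : Finset ι) :
    ∏ i ∈ s, a ^ g i = a ^ (∑ i ∈ s, g i) := by
  induction s using Finset.cons_induction with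
  | empty => simp
  | cons i s hi ih => rw [Finset.prod_cons, Finset.sum_cons, ih, zpow_add₀ ha]

lemma aux_finprod_zpow {ι : Type*} (a : ℝ) (ha : a ≠ 0) {g : ι → ℤ}
    (hg : (Function.support g).Finite) :
    ∏ᶠ i, a ^ g i = a ^ (∑ᶠ i, g i) := by
  rw [finprod_eq_finset_prod_of_mulSupport_subset (s := hg.toFinset) _
      (by intro i hi
          simp only [Function.mem_mulSupport] at hi
          simp only [Finset.mem_coe, Set.Finite.mem_toFinset, Function.mem_support]
          intro h; exact hi (by rw [h, zpow_zero])),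
    finsum_eq_finset_sum_of_support_subset g (s := hg.toFinset) (by simp)]
  exact aux_finset_zpow a ha g hg.toFinset

/-- Product formula for `𝔽_q(t)`: for every nonzero rational function `f`, the finitely
supported sum over all monic irreducible polynomials `π` of `ord_π(f) · deg(π)` equals
`intDegree f`; equivalently, `q^(intDegree f) · ∏_π q^(−deg(π)·ord_π(f)) = 1`. -/
theorem product_formula_function_field (Fq : Type) [Field Fq] [Fintype Fq]
    (q : ℕ) (hq : q = Fintype.card Fq) (f : RatFunc Fq) (hf : f ≠ 0) :
    {π : Polynomial Fq | (π.Monic ∧ Irreducible π) ∧ ordAt π f ≠ 0}.Finite ∧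
    (∑ᶠ π : {π : Polynomial Fq // π.Monic ∧ Irreducible π},
        ordAt (π : Polynomial Fq) f * ((π : Polynomial Fq).natDegree : ℤ)) = f.intDegree ∧
    ((q : ℝ) ^ f.intDegree) *
      (∏ᶠ π : {π : Polynomial Fq // π.Monic ∧ Irreducible π},
        (q : ℝ) ^ (-(((π : Polynomial Fq).natDegree : ℤ) * ordAt (π : Polynomial Fq) f))) = 1 := by
  classical
  have hnum : f.num ≠ 0 := RatFunc.num_ne_zero hf
  have hden : f.denom ≠ 0 := f.denom_ne_zero
  -- finiteness of the set of places in the support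
  have hfin : {π : Polynomial Fq | (π.Monic ∧ Irreducible π) ∧ ordAt π f ≠ 0}.Finite := by
    apply Set.Finite.subset
      (((normalizedFactors f.num).toFinset ∪ (normalizedFactors f.denom).toFinset).finite_toSet)
    rintro π ⟨hπ, hord⟩
    simp only [Finset.coe_union, Set.mem_union, Finset.mem_coe]
    by_contra hmem
    push_neg at hmem
    apply hord
    have h1 : ¬ π ∣ f.num := fun h => hmem.1 (aux_mem_nf hπ hnum h)
    have h2 : ¬ π ∣ f.denom := fun h => hmem.2 (aux_mem_nf hπ hden h)
    simp [ordAt, multiplicity_eq_zero.mpr h1, multiplicity_eq_zero.mpr h2]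
  -- finiteness of supports over the subtype
  have hNfin : (Function.support fun π : {π : Polynomial Fq // π.Monic ∧ Irreducible π} =>
      ((multiplicity (π : Polynomial Fq) f.num : ℤ) * ((π : Polynomial Fq).natDegree : ℤ))).Finite :=
    Set.Finite.subset (Finset.finite_toSet _) (aux_support_subset hnum)
  have hDfin : (Function.support fun π : {π : Polynomial Fq // π.Monic ∧ Irreducible π} =>
      ((multiplicity (π : Polynomial Fq) f.denom : ℤ) * ((π : Polynomial Fq).natDegree : ℤ))).Finite :=
    Set.Finite.subset (Finset.finite_toSet _) (aux_support_subset hden)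
  have hOfin : (Function.support fun π : {π : Polynomial Fq // π.Monic ∧ Irreducible π} =>
      ordAt (π : Polynomial Fq) f * ((π : Polynomial Fq).natDegree : ℤ)).Finite := by
    apply Set.Finite.subset (hNfin.union hDfin)
    intro π hπ
    simp only [Function.mem_support, ne_eq] at hπ
    simp only [Set.mem_union, Function.mem_support, ne_eq]
    by_contra h
    push_neg at h
    apply hπ
    simp only [ordAt, sub_mul, h.1, h.2, sub_zero]
  -- the sum formula
  have hsum : (∑ᶠ π : {π : Polynomial Fq // π.Monic ∧ Irreducible π},
      ordAt (π : Polynomial Fq) f * ((π : Polynomial Fq).natDegree : ℤ)) = f.intDegree := by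
    have : (fun π : {π : Polynomial Fq // π.Monic ∧ Irreducible π} =>
        ordAt (π : Polynomial Fq) f * ((π : Polynomial Fq).natDegree : ℤ)) =
        fun π : {π : Polynomial Fq // π.Monic ∧ Irreducible π} => ((multiplicity (π : Polynomial Fq) f.num : ℤ) * ((π : Polynomial Fq).natDegree : ℤ))
          - ((multiplicity (π : Polynomial Fq) f.denom : ℤ) * ((π : Polynomial Fq).natDegree : ℤ)) := by
      funext π; simp only [ordAt]; ring
    rw [this, finsum_sub_distrib hNfin hDfin, aux_sum_poly hnum, aux_sum_poly hden]
    rfl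
  refine ⟨hfin, hsum, ?_⟩
  -- the product formula
  have hq0 : (q : ℝ) ≠ 0 := by
    rw [hq]
    exact_mod_cast Fintype.card_ne_zero
  have hGfin : (Function.support fun π : {π : Polynomial Fq // π.Monic ∧ Irreducible π} =>
      (-(((π : Polynomial Fq).natDegree : ℤ) * ordAt (π : Polynomial Fq) f))).Finite := by
    apply Set.Finite.subset hOfin
    intro π hπ
    simp only [Function.mem_support, ne_eq] at hπ ⊢
    intro h; apply hπ; rw [mul_comm] at h; omega
  rw [aux_finprod_zpow _ hq0 hGfin]
  have : (∑ᶠ π : {π : Polynomial Fq // π.Monic ∧ Irreducible π},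
      (-(((π : Polynomial Fq).natDegree : ℤ) * ordAt (π : Polynomial Fq) f))) = -f.intDegree := by
    rw [← hsum, ← finsum_neg_distrib]
    exact finsum_congr fun π => by ring
  rw [this, ← zpow_add₀ hq0]
  simp
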